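/- Let a : ℝ × ℝ → ℝ be continuous and periodic of period 1 in its second variable. Suppose that for some constant C > 0 and all sufficiently small ε > 0 and all u in a fixed interval, |a(u, u/ε)| ≤ Cε. Then a(u, ξ) = 0 for all u in the interval and all ξ. -/

import Mathlib

/-- two-scale localization lemma. If `a(u, ξ)` is continuous,
`1`-periodic in `ξ`, and `a(u, u/ε) = O(ε)` uniformly for `u` in an interval,
then `a` vanishes on that interval (for all `ξ`). -/
theorem stmt12 (a : ℝ → ℝ → ℝ)
    (hcont : Continuous fun q : ℝ × ℝ => a q.1 q.2)
    (hper : ∀ u ξ, a u (ξ + 1) = a u ξ)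
    (α β : ℝ) (hαβ : α < β)
    (C : ℝ) (hC : 0 < C) (ε₀ : ℝ) (hε₀ : 0 < ε₀)
    (hbound : ∀ ε : ℝ, 0 < ε → ε < ε₀ → ∀ u ∈ Set.Icc α β, |a u (u / ε)| ≤ C * ε) :
    ∀ u ∈ Set.Icc α β, ∀ ξ, a u ξ = 0 := by
  -- periodicity for all integer shifts
  have hperZ : ∀ u ξ (n : ℤ), a u (ξ + n) = a u ξ := by
    intro u ξ n
    induction n using Int.induction_on with
    | zero => simp
    | succ k ih =>
      push_cast at ih ⊢
      rw [show ξ + ((k : ℝ) + 1) = (ξ + k) + 1 by ring, hper, ih]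
    | pred k ih =>
      push_cast at ih ⊢
      have := hper u (ξ + (-(k : ℝ) - 1))
      rw [show ξ + (-(k : ℝ) - 1) + 1 = ξ + -(k : ℝ) by ring] at this
      rw [← this]; exact ih
  -- main claim for u ≠ 0
  have key : ∀ u ∈ Set.Icc α β, u ≠ 0 → ∀ ξ, a u ξ = 0 := by
    intro u hu hu0 ξ
    have habs : ∀ δ : ℝ, 0 < δ → |a u ξ| ≤ 0 + δ := by
      intro δ hδ
      set m : ℝ := min ε₀ (δ / C) with hm
      have hm0 : 0 < m := lt_min hε₀ (div_pos hδ hC)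
      -- find ε ∈ (0, m) and n : ℤ with u / ε = ξ + n
      obtain ⟨ε, hε0, hεm, n, hn⟩ : ∃ ε : ℝ, 0 < ε ∧ ε < m ∧ ∃ n : ℤ, u / ε = ξ + n := by
        rcases lt_or_gt_of_ne hu0 with hneg | hpos
        · -- u < 0 : choose ξ + n < u / m < 0
          refine ⟨u / (ξ + (⌊min (u / m - ξ) (-ξ)⌋ - 1 : ℤ)), ?_, ?_,
            ⟨⌊min (u / m - ξ) (-ξ)⌋ - 1, ?_⟩⟩
          all_goals {
            have hfl : ((⌊min (u / m - ξ) (-ξ)⌋ - 1 : ℤ) : ℝ) < min (u / m - ξ) (-ξ) := by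
              push_cast
              have := Int.floor_le (min (u / m - ξ) (-ξ))
              linarith
            have h1 : ξ + ((⌊min (u / m - ξ) (-ξ)⌋ - 1 : ℤ) : ℝ) < u / m := by
              have := min_le_left (u / m - ξ) (-ξ); linarith
            have h2 : ξ + ((⌊min (u / m - ξ) (-ξ)⌋ - 1 : ℤ) : ℝ) < 0 := by
              have := min_le_right (u / m - ξ) (-ξ); linarith
            first
            | exact div_pos_of_neg_of_neg hneg h2
            | rw [div_div_eq_mul_div, mul_div_cancel_left₀ _ hu0]
            | · rw [div_lt_iff_of_neg h2]
                have h4 := mul_lt_mul_of_pos_left h1 hm0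
                have h5 : m * (u / m) = u := by field_simp
                linarith
          }
        · -- u > 0 : choose ξ + n > u / m > 0
          refine ⟨u / (ξ + (⌈max (u / m - ξ) (-ξ)⌉ + 1 : ℤ)), ?_, ?_,
            ⟨⌈max (u / m - ξ) (-ξ)⌉ + 1, ?_⟩⟩
          all_goals {
            have hcl : max (u / m - ξ) (-ξ) < ((⌈max (u / m - ξ) (-ξ)⌉ + 1 : ℤ) : ℝ) := by
              push_cast
              have := Int.le_ceil (max (u / m - ξ) (-ξ))
              linarith
            have h1 : u / m < ξ + ((⌈max (u / m - ξ) (-ξ)⌉ + 1 : ℤ) : ℝ) := by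
              have := le_max_left (u / m - ξ) (-ξ); linarith
            have h2 : 0 < ξ + ((⌈max (u / m - ξ) (-ξ)⌉ + 1 : ℤ) : ℝ) := by
              have h3 : (0:ℝ) < u / m := div_pos hpos hm0
              linarith
            first
            | exact div_pos hpos h2
            | rw [div_div_eq_mul_div, mul_div_cancel_left₀ _ hu0]
            | · rw [div_lt_iff₀ h2]
                have h4 := mul_lt_mul_of_pos_left h1 hm0
                have h5 : m * (u / m) = u := by field_simp
                nlinarith
          }
      -- conclude
      have hval : a u ξ = a u (u / ε) := by
        rw [hn, hperZ]
      rw [hval]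
      have hb := hbound ε hε0 (lt_of_lt_of_le hεm (min_le_left _ _)) u hu
      have hmδ : C * m ≤ δ := by
        have : m ≤ δ / C := min_le_right _ _
        calc C * m ≤ C * (δ / C) := by nlinarith
        _ = δ := by field_simp
      nlinarith
    have h0 : |a u ξ| ≤ 0 := le_of_forall_pos_le_add habs
    have := abs_nonneg (a u ξ)
    have : |a u ξ| = 0 := le_antisymm h0 this
    exact abs_eq_zero.mp this
  intro u hu ξ
  rcases eq_or_ne u 0 with rfl | hu0
  · -- u = 0 : use continuity and key on a sequence tending to 0
    have hα0 : α ≤ 0 := hu.1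
    have h0β : (0:ℝ) ≤ β := hu.2
    have hc1 : Continuous fun t : ℝ => a t ξ :=
      hcont.comp (continuous_id.prodMk continuous_const)
    rcases lt_or_ge 0 β with hβ | hβ
    · -- use u_k = β / (k+1)
      have ht : Filter.Tendsto (fun k : ℕ => β / (k + 1)) Filter.atTop (nhds 0) :=
        tendsto_const_div_atTop_nhds_zero_nat β |>.comp (Filter.tendsto_add_atTop_nat 1) |>.congr
          (by intro k; simp)
      have hz : ∀ k : ℕ, a (β / (k + 1)) ξ = 0 := by
        intro k
        have hk1 : (0:ℝ) < (k:ℝ) + 1 := by positivity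
        have hkpos : 0 < β / (k + 1) := div_pos hβ hk1
        have hkle : β / (k + 1) ≤ β := by
          rw [div_le_iff₀ hk1]; nlinarith
        exact key _ ⟨le_trans hα0 hkpos.le, hkle⟩ (ne_of_gt hkpos) ξ
      have hlim : Filter.Tendsto (fun k : ℕ => a (β / (k + 1)) ξ) Filter.atTop (nhds (a 0 ξ)) :=
        (hc1.continuousAt.tendsto).comp ht
      have hlim0 : Filter.Tendsto (fun k : ℕ => a (β / (k + 1)) ξ) Filter.atTop (nhds 0) := by
        simp only [hz]; exact tendsto_const_nhds
      exact tendsto_nhds_unique hlim hlim0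
    · -- then α < 0; use u_k = α / (k+1)
      have hα : α < 0 := lt_of_lt_of_le hαβ hβ
      have ht : Filter.Tendsto (fun k : ℕ => α / (k + 1)) Filter.atTop (nhds 0) :=
        tendsto_const_div_atTop_nhds_zero_nat α |>.comp (Filter.tendsto_add_atTop_nat 1) |>.congr
          (by intro k; simp)
      have hz : ∀ k : ℕ, a (α / (k + 1)) ξ = 0 := by
        intro k
        have hk1 : (0:ℝ) < (k:ℝ) + 1 := by positivity
        have hkneg : α / (k + 1) < 0 := div_neg_of_neg_of_pos hα hk1
        have hkge : α ≤ α / (k + 1) := by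
          rw [le_div_iff₀ hk1]; nlinarith
        exact key _ ⟨hkge, le_trans hkneg.le h0β⟩ (ne_of_lt hkneg) ξ
      have hlim : Filter.Tendsto (fun k : ℕ => a (α / (k + 1)) ξ) Filter.atTop (nhds (a 0 ξ)) :=
        (hc1.continuousAt.tendsto).comp ht
      have hlim0 : Filter.Tendsto (fun k : ℕ => a (α / (k + 1)) ξ) Filter.atTop (nhds 0) := by
        simp only [hz]; exact tendsto_const_nhds
      exact tendsto_nhds_unique hlim hlim0
  · exact key u hu hu0 ξ
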